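/- For any formulas F and G, the nested program P1 = { F;G , ⊥ ← F,G } and the nested program P2 = { F ← not G , G ← not F , ⊥ ← F,G } have exactly the same SE-models, and hence are strongly equivalent. -/
import Mathlib


open scoped Classical

inductive Lit where
  | pos : ℕ → Lit
  | neg : ℕ → Lit
deriving DecidableEq

inductive Fml where
  | bot : Fml
  | top : Fml
  | lit : Lit → Fml
  | not : Fml → Fml
  | conj : Fml → Fml → Fml
  | disj : Fml → Fml → Fml
deriving DecidableEq

structure Rule where
  head : Fml
  body : Fml
deriving DecidableEq

abbrev Prog := Set Rule

/-- A set of literals is consistent if it contains no complementary pair. -/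
def Consistent (X : Set Lit) : Prop :=
  ∀ a : ℕ, ¬ (Lit.pos a ∈ X ∧ Lit.neg a ∈ X)

def Sat (X : Set Lit) : Fml → Prop
  | Fml.bot => False
  | Fml.top => True
  | Fml.lit l => l ∈ X
  | Fml.not F => ¬ Sat X F
  | Fml.conj F G => Sat X F ∧ Sat X G
  | Fml.disj F G => Sat X F ∨ Sat X G

def SatRule (X : Set Lit) (r : Rule) : Prop := Sat X r.body → Sat X r.head

def SatProg (X : Set Lit) (P : Prog) : Prop := ∀ r ∈ P, SatRule X r

/-- The reduct of a formula relative to X. -/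
noncomputable def Reduct (X : Set Lit) : Fml → Fml
  | Fml.bot => Fml.bot
  | Fml.top => Fml.top
  | Fml.lit l => Fml.lit l
  | Fml.not F => if Sat X F then Fml.bot else Fml.top
  | Fml.conj F G => Fml.conj (Reduct X F) (Reduct X G)
  | Fml.disj F G => Fml.disj (Reduct X F) (Reduct X G)

noncomputable def ReductRule (X : Set Lit) (r : Rule) : Rule :=
  ⟨Reduct X r.head, Reduct X r.body⟩

noncomputable def ReductProg (X : Set Lit) (P : Prog) : Prog :=
  ReductRule X '' P

/-- Y is an answer set for P: Y is minimal among consistent sets satisfying the reduct of P w.r.t. Y. -/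
def AnswerSet (Y : Set Lit) (P : Prog) : Prop :=
  Consistent Y ∧ SatProg Y (ReductProg Y P) ∧
    ∀ Z : Set Lit, Consistent Z → SatProg Z (ReductProg Y P) → Z ⊆ Y → Z = Y

def SEModel (P : Prog) (X Y : Set Lit) : Prop :=
  Consistent X ∧ Consistent Y ∧ X ⊆ Y ∧ SatProg Y P ∧ SatProg X (ReductProg Y P)

def StrongEq (P Q : Prog) : Prop :=
  ∀ R : Prog, ∀ Y : Set Lit, AnswerSet Y (P ∪ R) ↔ AnswerSet Y (Q ∪ R)

def Fml.negFree : Fml → Prop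
  | Fml.bot => True
  | Fml.top => True
  | Fml.lit l => ∃ a, l = Lit.pos a
  | Fml.not F => F.negFree
  | Fml.conj F G => F.negFree ∧ G.negFree
  | Fml.disj F G => F.negFree ∧ G.negFree

def ProgNegFree (P : Prog) : Prop := ∀ r ∈ P, r.head.negFree ∧ r.body.negFree

/-- The set of atoms (positive literals) in a set of literals. -/
def PosLits (Z : Set Lit) : Set Lit := {l ∈ Z | ∃ a, l = Lit.pos a}

def AtomsOnly (Z : Set Lit) : Prop := ∀ l ∈ Z, ∃ a, l = Lit.pos a

lemma sat_reduct_mono {X Y : Set Lit} (h : X ⊆ Y) :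
    ∀ F, Sat X (Reduct Y F) → Sat Y (Reduct Y F) := by
  intro F
  induction F with
  | bot => exact id
  | top => exact id
  | lit l => exact fun hl => h hl
  | not F ih => simp only [Reduct]; split <;> simp [Sat]
  | conj F G ihF ihG => exact fun ⟨a, b⟩ => ⟨ihF a, ihG b⟩
  | disj F G ihF ihG =>
      rintro (a | b)
      · exact Or.inl (ihF a)
      · exact Or.inr (ihG b)

lemma sat_reduct_self {Y : Set Lit} : ∀ F, Sat Y (Reduct Y F) ↔ Sat Y F := by
  intro F
  induction F with
  | bot => rfl
  | top => rfl
  | lit l => rfl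
  | not F ih => simp only [Reduct]; split <;> simp_all [Sat]
  | conj F G ihF ihG => simp [Reduct, Sat, ihF, ihG]
  | disj F G ihF ihG => simp [Reduct, Sat, ihF, ihG]

lemma sat_reduct_imp {X Y : Set Lit} (h : X ⊆ Y) (F : Fml)
    (hs : Sat X (Reduct Y F)) : Sat Y F :=
  (sat_reduct_self F).mp (sat_reduct_mono h F hs)

lemma satProg_reduct_self {Y : Set Lit} {P : Prog} :
    SatProg Y (ReductProg Y P) ↔ SatProg Y P := by
  constructor
  · intro h r hr
    have := h (ReductRule Y r) ⟨r, hr, rfl⟩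
    intro hb
    exact (sat_reduct_self r.head).mp (this ((sat_reduct_self r.body).mpr hb))
  · rintro h r ⟨s, hs, rfl⟩
    intro hb
    exact (sat_reduct_self s.head).mpr (h s hs ((sat_reduct_self s.body).mp hb))

lemma satProg_union {X : Set Lit} {P Q : Prog} :
    SatProg X (P ∪ Q) ↔ SatProg X P ∧ SatProg X Q := by
  constructor
  · exact fun h => ⟨fun r hr => h r (Or.inl hr), fun r hr => h r (Or.inr hr)⟩
  · rintro ⟨h1, h2⟩ r (hr | hr)
    · exact h1 r hr
    · exact h2 r hr

lemma reductProg_union {Y : Set Lit} {P Q : Prog} :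
    ReductProg Y (P ∪ Q) = ReductProg Y P ∪ ReductProg Y Q := by
  simp [ReductProg, Set.image_union]

lemma se_strongEq {P Q : Prog}
    (h : ∀ X Y : Set Lit, SEModel P X Y ↔ SEModel Q X Y) : StrongEq P Q := by
  have key : ∀ Y : Set Lit, Consistent Y → (SatProg Y P ↔ SatProg Y Q) := by
    intro Y hY
    constructor
    · intro hP
      exact ((h Y Y).mp
        ⟨hY, hY, le_refl Y, hP, satProg_reduct_self.mpr hP⟩).2.2.2.1
    · intro hQ
      exact ((h Y Y).mpr
        ⟨hY, hY, le_refl Y, hQ, satProg_reduct_self.mpr hQ⟩).2.2.2.1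
  have key2 : ∀ Z Y : Set Lit, Consistent Z → Consistent Y → Z ⊆ Y →
      SatProg Y P → (SatProg Z (ReductProg Y P) ↔ SatProg Z (ReductProg Y Q)) := by
    intro Z Y hZ hY hZY hYP
    constructor
    · intro hs
      exact ((h Z Y).mp ⟨hZ, hY, hZY, hYP, hs⟩).2.2.2.2
    · intro hs
      exact ((h Z Y).mpr ⟨hZ, hY, hZY, (key Y hY).mp hYP, hs⟩).2.2.2.2
  intro R Y
  constructor
  · rintro ⟨hY, hsat, hmin⟩
    have hPR : SatProg Y P ∧ SatProg Y R := by
      have := satProg_reduct_self.mp hsat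
      exact satProg_union.mp this
    have hQ : SatProg Y Q := (key Y hY).mp hPR.1
    refine ⟨hY, satProg_reduct_self.mpr (satProg_union.mpr ⟨hQ, hPR.2⟩), ?_⟩
    intro Z hZ hsZ hZY
    apply hmin Z hZ _ hZY
    rw [reductProg_union] at hsZ ⊢
    obtain ⟨hsZQ, hsZR⟩ := satProg_union.mp hsZ
    exact satProg_union.mpr ⟨(key2 Z Y hZ hY hZY hPR.1).mpr hsZQ, hsZR⟩
  · rintro ⟨hY, hsat, hmin⟩
    have hQR : SatProg Y Q ∧ SatProg Y R := by
      have := satProg_reduct_self.mp hsat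
      exact satProg_union.mp this
    have hP : SatProg Y P := (key Y hY).mpr hQR.1
    refine ⟨hY, satProg_reduct_self.mpr (satProg_union.mpr ⟨hP, hQR.2⟩), ?_⟩
    intro Z hZ hsZ hZY
    apply hmin Z hZ _ hZY
    rw [reductProg_union] at hsZ ⊢
    obtain ⟨hsZP, hsZR⟩ := satProg_union.mp hsZ
    exact satProg_union.mpr ⟨(key2 Z Y hZ hY hZY hP).mp hsZP, hsZR⟩

/-- P1 = { F;G , ⊥ ← F,G } and P2 = { F ← not G , G ← not F , ⊥ ← F,G }
have the same SE-models, hence are strongly equivalent. -/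
theorem stmt8 (F G : Fml) :
    (∀ X Y : Set Lit,
        SEModel ({⟨Fml.disj F G, Fml.top⟩, ⟨Fml.bot, Fml.conj F G⟩} : Prog) X Y ↔
        SEModel ({⟨F, Fml.not G⟩, ⟨G, Fml.not F⟩, ⟨Fml.bot, Fml.conj F G⟩} : Prog) X Y) ∧
    StrongEq ({⟨Fml.disj F G, Fml.top⟩, ⟨Fml.bot, Fml.conj F G⟩} : Prog)
      ({⟨F, Fml.not G⟩, ⟨G, Fml.not F⟩, ⟨Fml.bot, Fml.conj F G⟩} : Prog) := by
  have hse : ∀ X Y : Set Lit,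
      SEModel ({⟨Fml.disj F G, Fml.top⟩, ⟨Fml.bot, Fml.conj F G⟩} : Prog) X Y ↔
      SEModel ({⟨F, Fml.not G⟩, ⟨G, Fml.not F⟩, ⟨Fml.bot, Fml.conj F G⟩} : Prog) X Y := by
    intro X Y
    unfold SEModel
    have h1 : SatProg Y ({⟨Fml.disj F G, Fml.top⟩, ⟨Fml.bot, Fml.conj F G⟩} : Prog) ↔
        ((Sat Y F ∨ Sat Y G) ∧ ¬(Sat Y F ∧ Sat Y G)) := by
      simp [SatProg, SatRule, Sat]
    have h2 : SatProg Y ({⟨F, Fml.not G⟩, ⟨G, Fml.not F⟩, ⟨Fml.bot, Fml.conj F G⟩} : Prog) ↔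
        ((¬Sat Y G → Sat Y F) ∧ (¬Sat Y F → Sat Y G) ∧ ¬(Sat Y F ∧ Sat Y G)) := by
      simp [SatProg, SatRule, Sat]
    have h3 : SatProg X (ReductProg Y
        ({⟨Fml.disj F G, Fml.top⟩, ⟨Fml.bot, Fml.conj F G⟩} : Prog)) ↔
        ((Sat X (Reduct Y F) ∨ Sat X (Reduct Y G)) ∧
          ¬(Sat X (Reduct Y F) ∧ Sat X (Reduct Y G))) := by
      simp [ReductProg, Set.image_insert_eq, Set.image_singleton, ReductRule, Reduct,
        SatProg, SatRule, Sat]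
    have h4 : SatProg X (ReductProg Y
        ({⟨F, Fml.not G⟩, ⟨G, Fml.not F⟩, ⟨Fml.bot, Fml.conj F G⟩} : Prog)) ↔
        ((Sat X (Reduct Y (Fml.not G)) → Sat X (Reduct Y F)) ∧
          (Sat X (Reduct Y (Fml.not F)) → Sat X (Reduct Y G)) ∧
          ¬(Sat X (Reduct Y F) ∧ Sat X (Reduct Y G))) := by
      simp only [ReductProg, Set.image_insert_eq, Set.image_singleton, ReductRule]
      simp [Reduct, SatProg, SatRule, Sat]
    rw [h1, h2, h3, h4]
    constructor
    · rintro ⟨hX, hY, hXY, ⟨hYor, hYnand⟩, hXor, hXnand⟩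
      refine ⟨hX, hY, hXY, ⟨fun h => hYor.resolve_right h, fun h => hYor.resolve_left h,
        hYnand⟩, ?_, ?_, hXnand⟩
      · intro hnG
        rcases hXor with hF | hG
        · exact hF
        · exact absurd (sat_reduct_imp hXY G hG)
            (by simp only [Reduct, Sat] at hnG; split at hnG <;> simp_all [Sat])
      · intro hnF
        rcases hXor with hF | hG
        · exact absurd (sat_reduct_imp hXY F hF)
            (by simp only [Reduct, Sat] at hnF; split at hnF <;> simp_all [Sat])
        · exact hG
    · rintro ⟨hX, hY, hXY, ⟨hY1, hY2, hYnand⟩, hX1, hX2, hXnand⟩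
      refine ⟨hX, hY, hXY, ⟨?_, hYnand⟩, ?_, hXnand⟩
      · by_cases hG : Sat Y G
        · exact Or.inr hG
        · exact Or.inl (hY1 hG)
      · by_cases hG : Sat Y G
        · have hnF : ¬ Sat Y F := fun hF => hYnand ⟨hF, hG⟩
          refine Or.inr (hX2 ?_)
          simp only [Reduct, Sat]
          split <;> simp_all [Sat]
        · refine Or.inl (hX1 ?_)
          simp only [Reduct, Sat]
          split <;> simp_all [Sat]
  exact ⟨hse, se_strongEq hse⟩
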